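/- Let T : ℝ₊^N → ℝ₊^N be continuous and monotone (x ≤ y ⇒ T(x) ≤ T(y)), and define S : ℝ₊^N → [0,∞]^N coordinatewise by S_i(d) := liminf_{t→∞, y→d, y∈ℝ₊^N} T_i(ty)/t. Then S is monotone on ℝ₊^N: for all d, d' ∈ ℝ₊^N with d ≤ d', S_i(d) ≤ S_i(d') for every coordinate i. -/

import Mathlib

open Filter Topology

/-- If `T : ℝ₊^N → ℝ₊^N` is continuous and monotone, then the asymptotic mapping `S`
defined coordinatewise by `S_i(d) = liminf_{t→∞, y→d, y∈ℝ₊^N} T_i(ty)/t ∈ [0,∞]`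
(values in `EReal`) is monotone on `ℝ₊^N`. -/
theorem stmt_16 (N : ℕ) (hN : 1 ≤ N)
    (T : (Fin N → ℝ) → (Fin N → ℝ))
    (hT_nonneg : ∀ x : Fin N → ℝ, (∀ i, 0 ≤ x i) → ∀ i, 0 ≤ T x i)
    (hT_cont : ContinuousOn T {x : Fin N → ℝ | ∀ i, 0 ≤ x i})
    (hT_mono : ∀ x y : Fin N → ℝ, (∀ i, 0 ≤ x i) → (∀ i, 0 ≤ y i) → x ≤ y → T x ≤ T y)
    (S : (Fin N → ℝ) → Fin N → EReal)
    (hS : ∀ dd : Fin N → ℝ, (∀ i, 0 ≤ dd i) → ∀ i : Fin N,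
      S dd i = Filter.liminf
        (fun q : ℝ × (Fin N → ℝ) => ((T (q.1 • q.2) i : ℝ) : EReal) / ((q.1 : ℝ) : EReal))
        ((atTop : Filter ℝ) ×ˢ (𝓝 dd ⊓ Filter.principal {y : Fin N → ℝ | ∀ i, 0 ≤ y i}))) :
    ∀ d d' : Fin N → ℝ, (∀ i, 0 ≤ d i) → (∀ i, 0 ≤ d' i) → d ≤ d' →
      ∀ i : Fin N, S d i ≤ S d' i := by
  intro d d' hd hd' hdd' i
  rw [hS d hd i, hS d' hd' i]
  set P : Set (Fin N → ℝ) := {y : Fin N → ℝ | ∀ i, 0 ≤ y i} with hP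
  set f : ℝ × (Fin N → ℝ) → EReal :=
    fun q => ((T (q.1 • q.2) i : ℝ) : EReal) / ((q.1 : ℝ) : EReal) with hf
  set m : (Fin N → ℝ) → (Fin N → ℝ) := fun y j => min (y j) (d j) with hm
  set Φ : ℝ × (Fin N → ℝ) → ℝ × (Fin N → ℝ) := fun q => (q.1, m q.2) with hΦdef
  have hmcont : Continuous m := by
    apply continuous_pi
    intro j
    exact (continuous_apply j).min continuous_const
  have hmd' : m d' = d := by
    funext j
    exact min_eq_right (hdd' j)
  have hΦ : Tendsto Φ ((atTop : Filter ℝ) ×ˢ (𝓝 d' ⊓ Filter.principal P))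
      ((atTop : Filter ℝ) ×ˢ (𝓝 d ⊓ Filter.principal P)) := by
    apply Tendsto.prodMap tendsto_id
    apply tendsto_inf.mpr
    constructor
    · have := hmcont.tendsto d'
      rw [hmd'] at this
      exact this.mono_left inf_le_left
    · rw [tendsto_principal]
      apply Eventually.filter_mono inf_le_right
      rw [eventually_principal]
      intro y hy j
      exact le_min (hy j) (hd j)
  calc liminf f ((atTop : Filter ℝ) ×ˢ (𝓝 d ⊓ Filter.principal P))
      ≤ liminf (f ∘ Φ) ((atTop : Filter ℝ) ×ˢ (𝓝 d' ⊓ Filter.principal P)) := by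
        have heq : liminf (f ∘ Φ) ((atTop : Filter ℝ) ×ˢ (𝓝 d' ⊓ Filter.principal P))
            = liminf f (Filter.map Φ ((atTop : Filter ℝ) ×ˢ (𝓝 d' ⊓ Filter.principal P))) := by
          simp only [Filter.liminf, Filter.map_map]
        rw [heq]
        exact liminf_le_liminf_of_le hΦ
    _ ≤ liminf f ((atTop : Filter ℝ) ×ˢ (𝓝 d' ⊓ Filter.principal P)) := by
        refine liminf_le_liminf ?_
        have h1 : ∀ᶠ q : ℝ × (Fin N → ℝ) in
            (atTop : Filter ℝ) ×ˢ (𝓝 d' ⊓ Filter.principal P), 0 ≤ q.1 :=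
          (eventually_ge_atTop 0).prod_inl _
        have h2 : ∀ᶠ q : ℝ × (Fin N → ℝ) in
            (atTop : Filter ℝ) ×ˢ (𝓝 d' ⊓ Filter.principal P), ∀ j, 0 ≤ q.2 j :=
          Eventually.prod_inr (Eventually.filter_mono inf_le_right
            (eventually_principal.mpr (fun y hy => hy))) _
        filter_upwards [h1, h2] with q hq1 hq2
        have hmq : ∀ j, 0 ≤ m q.2 j := fun j => le_min (hq2 j) (hd j)
        have hle : q.1 • m q.2 ≤ q.1 • q.2 := by
          intro j
          exact mul_le_mul_of_nonneg_left (min_le_left _ _) hq1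
        have hnn1 : ∀ j, 0 ≤ (q.1 • m q.2) j := fun j => mul_nonneg hq1 (hmq j)
        have hnn2 : ∀ j, 0 ≤ (q.1 • q.2) j := fun j => mul_nonneg hq1 (hq2 j)
        have hT := hT_mono _ _ hnn1 hnn2 hle i
        simp only [hf, Function.comp, hΦdef]
        exact EReal.div_le_div_right_of_nonneg (by exact_mod_cast hq1) (by exact_mod_cast hT)
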